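/- From a k-learner regret bound to a saddle-point lower bound: suppose gains g_t(w̃) = (Σ_j w_t^j Δ_ε^j) Σ_k w̃^k d(μ^k,λ_t^k)/Δ_ε^k with w_t^k ∝ w̃_t^k/Δ_ε^k, λ_t a best response in Λ to w_t, and Σ_{t=1}^n g_t(w̃_t) ≥ max_k Σ_{t=1}^n (Σ_j w_t^j Δ_ε^j) d(μ^k,λ_t^k)/Δ_ε^k − B. If additionally Σ_{t=1}^n inf_{λ∈Λ} Σ_k w_t^k d(μ^k,λ^k) ≤ L, then R_n^ε · D_ε ≤ L + B, where R_n^ε = Σ_{t=1}^n Σ_k w_t^k Δ_ε^k and D_ε = inf_{q∈Δ(Λ)} max_k E_{λ∼q}[d(μ^k,λ^k)]/Δ_ε^k. -/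

import Mathlib

open MeasureTheory

lemma integrable_dirac_aux {α : Type*} [MeasurableSpace α] [MeasurableSingletonClass α]
    (f : α → ℝ) (a : α) : Integrable f (Measure.dirac a) :=
  (integrable_const (f a)).congr (ae_eq_dirac f).symm

/-- From a `k`-learner regret bound to a saddle-point lower bound: if the learner's
gains are within `B` of the best fixed arm and the accumulated information is at most
`L`, then the perturbed regret `R_n^ε` satisfies `R_n^ε · D_ε ≤ L + B`. -/
theorem k_learner_regret_to_saddle_point {K n : ℕ} [Nonempty (Fin K)]
    {Λ : Type*} [MeasurableSpace Λ] [MeasurableSingletonClass Λ] [Nonempty Λ]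
    (d : Fin K → Λ → ℝ) (hmeas : ∀ k, Measurable (d k)) (hd : ∀ k l, 0 ≤ d k l)
    (Δ : Fin K → ℝ) (hΔ : ∀ k, 0 < Δ k)
    (wt : Fin n → Fin K → ℝ) (hwt : ∀ t, wt t ∈ stdSimplex ℝ (Fin K))
    (w : Fin n → Fin K → ℝ)
    (hw : ∀ t k, w t k = (wt t k / Δ k) / ∑ j, wt t j / Δ j)
    (lam : Fin n → Λ)
    (hbr : ∀ t, ∀ l : Λ, ∑ k, w t k * d k (lam t) ≤ ∑ k, w t k * d k l)
    (B L : ℝ) (hB : 0 ≤ B) (hL : 0 ≤ L)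
    (hreg : ∀ j : Fin K,
      ∑ t, (∑ i, w t i * Δ i) * (d j (lam t) / Δ j) ≤
        (∑ t, (∑ i, w t i * Δ i) * ∑ k, wt t k * (d k (lam t) / Δ k)) + B)
    (hinfo : ∑ t, ⨅ l : Λ, ∑ k, w t k * d k l ≤ L) :
    (∑ t, ∑ k, w t k * Δ k) *
        (⨅ q : ProbabilityMeasure Λ, ⨆ j : Fin K,
          (∫ l, d j l ∂(q : Measure Λ)) / Δ j) ≤ L + B := by
  classical
  -- basic positivity facts
  set S : Fin n → ℝ := fun t => ∑ j, wt t j / Δ j with hS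
  have hSpos : ∀ t, 0 < S t := by
    intro t
    obtain ⟨hnn, hsum⟩ := hwt t
    have : ∃ j, 0 < wt t j := by
      by_contra h
      push_neg at h
      have : ∑ j, wt t j = 0 := Finset.sum_eq_zero fun j _ => le_antisymm (h j) (hnn j)
      rw [hsum] at this; norm_num at this
    obtain ⟨j0, hj0⟩ := this
    have h1 : wt t j0 / Δ j0 ≤ S t :=
      Finset.single_le_sum (fun i _ => div_nonneg (hnn i) (hΔ i).le) (Finset.mem_univ j0)
    exact lt_of_lt_of_le (div_pos hj0 (hΔ j0)) h1
  have hwnn : ∀ t k, 0 ≤ w t k := fun t k => by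
    rw [hw t k]
    exact div_nonneg (div_nonneg ((hwt t).1 k) (hΔ k).le) (hSpos t).le
  -- c t = ∑ i, w t i * Δ i = 1 / S t
  set c : Fin n → ℝ := fun t => ∑ i, w t i * Δ i with hc
  have hcS : ∀ t, c t = 1 / S t := by
    intro t
    have : ∀ i, w t i * Δ i = wt t i / S t := by
      intro i
      simp only [hS]
      rw [hw t i, div_div, div_mul_eq_mul_div, mul_comm (wt t i) (Δ i),
        mul_div_mul_left _ _ (hΔ i).ne']
    simp only [hc, this, ← Finset.sum_div, (hwt t).2]
  have hcpos : ∀ t, 0 < c t := fun t => by rw [hcS t]; exact one_div_pos.mpr (hSpos t)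
  -- the middle term equals the best-response value
  have hmid : ∀ t, c t * ∑ k, wt t k * (d k (lam t) / Δ k) = ∑ k, w t k * d k (lam t) := by
    intro t
    rw [hcS t, Finset.mul_sum]
    refine Finset.sum_congr rfl fun k _ => ?_
    rw [hw t k]
    field_simp
    ring
  -- middle term sum is at most L
  have hmidL : ∑ t, c t * ∑ k, wt t k * (d k (lam t) / Δ k) ≤ L := by
    refine le_trans (Finset.sum_le_sum fun t _ => ?_) hinfo
    rw [hmid t]
    exact le_ciInf (hbr t)
  set Rn : ℝ := ∑ t, ∑ k, w t k * Δ k with hRn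
  have hRnc : Rn = ∑ t, c t := rfl
  have hRnn : 0 ≤ Rn := Finset.sum_nonneg fun t _ => (hcpos t).le
  -- D is nonneg
  have hDnn : 0 ≤ ⨅ q : ProbabilityMeasure Λ, ⨆ j : Fin K,
      (∫ l, d j l ∂(q : Measure Λ)) / Δ j := by
    haveI : Nonempty (ProbabilityMeasure Λ) :=
      ⟨⟨Measure.dirac (Classical.arbitrary Λ), Measure.dirac.isProbabilityMeasure⟩⟩
    refine le_ciInf fun q => ?_
    obtain ⟨j0⟩ := (inferInstance : Nonempty (Fin K))
    have h0 : 0 ≤ (∫ l, d j0 l ∂(q : Measure Λ)) / Δ j0 :=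
      div_nonneg (integral_nonneg fun l => hd j0 l) (hΔ j0).le
    exact h0.trans (le_ciSup (f := fun j : Fin K => (∫ l, d j l ∂(q : Measure Λ)) / Δ j)
      (Set.Finite.bddAbove (Set.finite_range _)) j0)
  rcases eq_or_lt_of_le hRnn with hR0 | hRpos
  · rw [← hR0, zero_mul]; linarith
  -- construct the mixture probability measure
  have hsum1 : ∑ t, c t / Rn = 1 := by
    rw [← Finset.sum_div, ← hRnc, div_self hRpos.ne']
  set μq : Measure Λ := ∑ t, (ENNReal.ofReal (c t / Rn)) • Measure.dirac (lam t) with hμq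
  have hprob : IsProbabilityMeasure μq := by
    constructor
    simp only [hμq, Measure.coe_finset_sum, Finset.sum_apply, Measure.smul_apply,
      smul_eq_mul, measure_univ, mul_one]
    rw [← ENNReal.ofReal_sum_of_nonneg fun t _ => div_nonneg (hcpos t).le hRnn, hsum1]
    simp
  set q : ProbabilityMeasure Λ := ⟨μq, hprob⟩ with hq
  have hint : ∀ j, ∫ l, d j l ∂μq = ∑ t, (c t / Rn) * d j (lam t) := by
    intro j
    rw [hμq, integral_finset_sum_measure]
    · refine Finset.sum_congr rfl fun t _ => ?_
      rw [integral_smul_measure, integral_dirac]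
      rw [ENNReal.toReal_ofReal (div_nonneg (hcpos t).le hRnn), smul_eq_mul]
    · intro t _
      exact ((integrable_dirac_aux (d j) (lam t)).smul_measure ENNReal.ofReal_ne_top)
  -- for each arm j, the value of the mixture is at most (L+B)/Rn
  have hsup : ∀ j : Fin K, (∫ l, d j l ∂μq) / Δ j ≤ (L + B) / Rn := by
    intro j
    rw [hint j]
    have heq : (∑ t, (c t / Rn) * d j (lam t)) / Δ j
        = (∑ t, c t * (d j (lam t) / Δ j)) / Rn := by
      rw [Finset.sum_div, Finset.sum_div]
      refine Finset.sum_congr rfl fun t _ => ?_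
      field_simp
    rw [heq]
    have h1 : ∑ t, c t * (d j (lam t) / Δ j) ≤ L + B :=
      le_trans (hreg j) (by linarith)
    exact (div_le_div_iff_of_pos_right hRpos).mpr h1
  have hD : (⨅ q : ProbabilityMeasure Λ, ⨆ j : Fin K,
      (∫ l, d j l ∂(q : Measure Λ)) / Δ j) ≤ (L + B) / Rn := by
    refine le_trans (ciInf_le ⟨0, fun x hx => ?_⟩ q) (ciSup_le fun j => hsup j)
    obtain ⟨q', hq'⟩ := hx
    obtain ⟨j0⟩ := (inferInstance : Nonempty (Fin K))
    have h0 : 0 ≤ (∫ l, d j0 l ∂(q' : Measure Λ)) / Δ j0 :=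
      div_nonneg (integral_nonneg fun l => hd j0 l) (hΔ j0).le
    rw [← hq']
    dsimp only
    exact h0.trans (le_ciSup (f := fun j : Fin K => (∫ l, d j l ∂(q' : Measure Λ)) / Δ j)
      (Set.Finite.bddAbove (Set.finite_range _)) j0)
  calc Rn * (⨅ q : ProbabilityMeasure Λ, ⨆ j : Fin K,
        (∫ l, d j l ∂(q : Measure Λ)) / Δ j)
      ≤ Rn * ((L + B) / Rn) := mul_le_mul_of_nonneg_left hD hRnn
    _ = L + B := by field_simp
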